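/- arXiv:2211.09468 — 4 statements merged into one kernel-verified Lean document; each statement's English description precedes it below -/
import Mathlib

section
/- Let F be a field with at least three elements and n ≥ 2. A matrix A ∈ GLₙ(F) is a product of unipotent matrices if and only if det A = 1, i.e., A ∈ SLₙ(F). -/
open Matrix Polynomial Finset

section Aux

variable {F : Type*} [Field F] {ι : Type*} [Fintype ι] [DecidableEq ι]

/-- A unipotent matrix has determinant 1. -/
lemma det_eq_one_of_unipotent {B : Matrix ι ι F} (h : IsNilpotent (1 - B)) : B.det = 1 := by
  set N : Matrix ι ι F := 1 - B with hN
  have hB : B = 1 - N := by rw [hN]; abel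
  have hc : N.charpoly = X ^ (Fintype.card ι) := by
    have h0 := (Matrix.isNilpotent_charpoly_sub_pow_of_isNilpotent h).eq_zero
    exact sub_eq_zero.mp h0
  have hmap : (charmatrix N).map (Polynomial.eval (1 : F)) = 1 - N := by
    ext k l
    by_cases hkl : k = l
    · subst hkl; simp [charmatrix_apply_eq, Matrix.one_apply]
    · simp [charmatrix_apply_ne _ _ _ hkl, Matrix.one_apply, hkl]
  calc B.det = ((charmatrix N).map (Polynomial.eval (1 : F))).det := by rw [hmap, ← hB]
    _ = Polynomial.eval 1 N.charpoly := by
        rw [Matrix.charpoly]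
        exact (RingHom.map_det (Polynomial.evalRingHom (1 : F)) _).symm
    _ = 1 := by rw [hc]; simp

/-- Transvections are unipotent. -/
lemma unipotent_transvection {i j : ι} (hij : i ≠ j) (c : F) :
    IsNilpotent (1 - Matrix.transvection i j c) := by
  refine ⟨2, ?_⟩
  have h1 : (1 : Matrix ι ι F) - Matrix.transvection i j c = -(single i j c) := by
    rw [Matrix.transvection]; abel
  rw [h1, sq, neg_mul_neg, single_mul_single_of_ne (h := hij.symm)]

set_option maxRecDepth 10000 in
/-- The key 2×2-style dilation factorization into six transvections. -/
lemma six_transvections {i j : ι} (hij : i ≠ j) {a b : F} (hab : a * b = 1) :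
    Matrix.transvection i j a * Matrix.transvection j i (-b) * Matrix.transvection i j a *
      (Matrix.transvection i j (-1) * Matrix.transvection j i 1 * Matrix.transvection i j (-1))
      = diagonal (fun k => if k = i then a else if k = j then b else 1) := by
  have hji := hij.symm
  simp only [Matrix.transvection, mul_add, add_mul, one_mul, mul_one,
    single_mul_single_same, single_mul_single_of_ne, hij, hji,
    mul_zero, zero_mul, add_zero, zero_add, ne_eq, not_false_eq_true]
  ext k l
  simp only [Matrix.add_apply, Matrix.diagonal_apply, Matrix.one_apply,
    Matrix.single, Matrix.of_apply]
  by_cases hki : i = k <;> by_cases hkj : j = k <;> by_cases hli : i = l <;> by_cases hlj : j = l <;>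
    subst_vars <;> simp_all [eq_comm] <;>
    first
      | linear_combination hab
      | linear_combination -hab
      | ring

open scoped Classical in
/-- A diagonal matrix of determinant 1 is a product of unipotent matrices. -/
lemma diagonal_prod_unipotent :
    ∀ (m : ℕ) (D : ι → F), (Finset.univ.filter fun k => D k ≠ 1).card ≤ m → ∏ k, D k = 1 →
      ∃ l : List (Matrix ι ι F), (∀ B ∈ l, IsNilpotent (1 - B)) ∧ l.prod = diagonal D := by
  intro m
  induction m with
  | zero =>
    intro D hcard hprod
    have hall : ∀ k, D k = 1 := by
      intro k
      by_contra hk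
      have : k ∈ Finset.univ.filter fun k => D k ≠ 1 := by simp [hk]
      have := Finset.card_pos.mpr ⟨k, this⟩
      omega
    refine ⟨[], by simp, ?_⟩
    rw [show D = fun _ => 1 from funext hall]
    simp
  | succ m IH =>
    intro D hcard hprod
    by_cases hm : (Finset.univ.filter fun k => D k ≠ 1).card ≤ m
    · exact IH D hm hprod
    by_cases h1 : (Finset.univ.filter fun k => D k ≠ 1).card ≤ 1
    · -- then in fact D = 1
      have hall : ∀ k, D k = 1 := by
        by_contra hex
        push_neg at hex
        obtain ⟨k, hk⟩ := hex
        have hkmem : k ∈ Finset.univ.filter fun k => D k ≠ 1 := by simp [hk]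
        have huniq := Finset.card_le_one.mp h1
        have : ∏ x, D x = D k := by
          refine Finset.prod_eq_single k (fun b _ hb => ?_) (fun h => absurd (Finset.mem_univ k) h)
          by_contra hDb
          exact hb (huniq b (by simp [hDb]) k hkmem)
        rw [hprod] at this
        exact hk this.symm
      refine ⟨[], by simp, ?_⟩
      rw [show D = fun _ => 1 from funext hall]
      simp
    · push_neg at h1
      obtain ⟨i, hi, j, hj, hijne⟩ := Finset.one_lt_card.mp h1
      have hDi0 : D i ≠ 0 := by
        intro h0
        have := Finset.prod_eq_zero (Finset.mem_univ i) h0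
        rw [hprod] at this
        exact one_ne_zero this
      have hab : D i * (D i)⁻¹ = 1 := mul_inv_cancel₀ hDi0
      set D' : ι → F := fun k => if k = i then 1 else if k = j then D i * D j else D k with hD'
      have hsplit : diagonal D
          = diagonal (fun k => if k = i then D i else if k = j then (D i)⁻¹ else 1)
            * diagonal D' := by
        rw [diagonal_mul_diagonal]
        refine congrArg diagonal (funext fun k => ?_)
        by_cases hki : k = i
        · subst hki; simp [hD']
        · by_cases hkj : k = j
          · subst hkj
            simp only [hD', hki, if_false, if_pos rfl, if_true]
            rw [inv_mul_cancel_left₀ hDi0]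
          · simp [hD', hki, hkj]
      have hifilter : i ∈ Finset.univ.filter fun k => D k ≠ 1 := hi
      have hsub : (Finset.univ.filter fun k => D' k ≠ 1)
          ⊆ (Finset.univ.filter fun k => D k ≠ 1).erase i := by
        intro k hk
        simp only [Finset.mem_filter, Finset.mem_univ, true_and, ne_eq] at hk
        have hki : k ≠ i := by
          intro h; subst h; exact hk (by simp [hD'])
        refine Finset.mem_erase.mpr ⟨hki, ?_⟩
        simp only [Finset.mem_filter, Finset.mem_univ, true_and, ne_eq]
        by_cases hkj : k = j
        · subst hkj
          simpa using hj
        · intro hDk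
          exact hk (by simp [hD', hki, hkj, hDk])
      have hcard' : (Finset.univ.filter fun k => D' k ≠ 1).card ≤ m := by
        have h2 := Finset.card_le_card hsub
        rw [Finset.card_erase_of_mem hifilter] at h2
        omega
      have key : ∀ f : ι → F, ∏ k, f k = (∏ k ∈ Finset.univ \ {i, j}, f k) * (f i * f j) := by
        intro f
        rw [← Finset.prod_pair hijne]
        exact (Finset.prod_sdiff (Finset.subset_univ {i, j})).symm
      have hprod' : ∏ k, D' k = 1 := by
        rw [key D']
        rw [key D] at hprod
        have hrest : ∏ k ∈ Finset.univ \ {i, j}, D' k = ∏ k ∈ Finset.univ \ {i, j}, D k := by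
          refine Finset.prod_congr rfl fun k hk => ?_
          simp only [Finset.mem_sdiff, Finset.mem_univ, true_and, Finset.mem_insert,
            Finset.mem_singleton, not_or] at hk
          simp [hD', hk.1, hk.2]
        rw [hrest]
        have hDi' : D' i = 1 := by simp [hD']
        have hDj' : D' j = D i * D j := by simp [hD', hijne.symm]
        rw [hDi', hDj', one_mul]
        linear_combination hprod
      obtain ⟨l', hl', hl'prod⟩ := IH D' hcard' hprod'
      refine ⟨[Matrix.transvection i j (D i), Matrix.transvection j i (-(D i)⁻¹),
          Matrix.transvection i j (D i),
          Matrix.transvection i j (-1), Matrix.transvection j i 1,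
          Matrix.transvection i j (-1)] ++ l', ?_, ?_⟩
      · intro B hB
        rw [List.mem_append] at hB
        rcases hB with hB | hB
        · simp only [List.mem_cons, List.not_mem_nil, or_false] at hB
          rcases hB with rfl | rfl | rfl | rfl | rfl | rfl
          · exact unipotent_transvection hijne (D i)
          · exact unipotent_transvection hijne.symm (-(D i)⁻¹)
          · exact unipotent_transvection hijne (D i)
          · exact unipotent_transvection hijne (-1)
          · exact unipotent_transvection hijne.symm 1
          · exact unipotent_transvection hijne (-1)
        · exact hl' B hB
      · rw [List.prod_append, hl'prod, hsplit]
        have h6 := six_transvections hijne hab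
        rw [← h6]
        simp only [List.prod_cons, List.prod_nil, mul_one, mul_assoc]

end Aux

theorem prod_unipotent_iff_det_one (F : Type*) [Field F]
    (h3 : ∃ a b c : F, a ≠ b ∧ b ≠ c ∧ a ≠ c) (n : ℕ) (hn : 2 ≤ n)
    (A : Matrix (Fin n) (Fin n) F) (hA : IsUnit A) :
    (∃ l : List (Matrix (Fin n) (Fin n) F),
        (∀ B ∈ l, IsNilpotent (1 - B)) ∧ l.prod = A) ↔ A.det = 1 := by
  constructor
  · rintro ⟨l, hl, rfl⟩
    rw [show l.prod.det = Matrix.detMonoidHom l.prod from rfl, map_list_prod]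
    refine List.prod_eq_one fun x hx => ?_
    obtain ⟨B, hB, rfl⟩ := List.mem_map.mp hx
    exact det_eq_one_of_unipotent (hl B hB)
  · intro hdet
    refine Matrix.diagonal_transvection_induction
      (fun M => ∃ l : List (Matrix (Fin n) (Fin n) F),
        (∀ B ∈ l, IsNilpotent (1 - B)) ∧ l.prod = M) A ?_ ?_ ?_
    · intro D hD
      rw [hdet, det_diagonal] at hD
      exact diagonal_prod_unipotent _ D le_rfl hD
    · rintro ⟨i, j, hij, c⟩
      exact ⟨[Matrix.transvection i j c], by simpa using unipotent_transvection hij c, by simp⟩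
    · rintro M N ⟨l1, hl1, rfl⟩ ⟨l2, hl2, rfl⟩
      refine ⟨l1 ++ l2, fun B hB => ?_, by simp⟩
      rcases List.mem_append.mp hB with h | h
      · exact hl1 B h
      · exact hl2 B h
end

section
/- Let F be a field with at least three elements and n ≥ 2. Every matrix A ∈ SLₙ(F) that is unipotent of index 2 (i.e., (Iₙ - A)² = 0) is a commutator in GLₙ(F). -/
theorem unipotent_index_two_commutator (F : Type*) [Field F]
    (h3 : ∃ a b c : F, a ≠ b ∧ b ≠ c ∧ a ≠ c) (n : ℕ) (hn : 2 ≤ n)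
    (A : Matrix (Fin n) (Fin n) F) (hdet : A.det = 1) (hA : (1 - A) ^ 2 = 0) :
    ∃ X Y : GL (Fin n) F, A = ((X * Y * X⁻¹ * Y⁻¹ : GL (Fin n) F) : Matrix (Fin n) (Fin n) F) := by
  -- obtain a scalar c with c ≠ 0 and c ≠ 1
  obtain ⟨c, hc0, hc1⟩ : ∃ c : F, c ≠ 0 ∧ c ≠ 1 := by
    obtain ⟨a, b, c, hab, hbc, hac⟩ := h3
    by_contra h
    push_neg at h
    have ha := h a; have hb := h b; have hc := h c
    rcases eq_or_ne a 0 with h1 | h1 <;> rcases eq_or_ne b 0 with h2 | h2 <;>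
      rcases eq_or_ne c 0 with h3' | h3' <;> simp_all
  set N : Matrix (Fin n) (Fin n) F := A - 1 with hNdef
  have hN2 : N * N = 0 := by
    have h1 : (1 - A) * (1 - A) = 0 := by rw [← sq]; exact hA
    have h2 : N = -(1 - A) := by rw [hNdef, neg_sub]
    rw [h2, neg_mul_neg, h1]
  -- linear map setup
  set φ : (Fin n → F) →ₗ[F] (Fin n → F) := Matrix.toLin' N with hφdef
  have hφ2 : ∀ x, φ (φ x) = 0 := by
    intro x
    have h := Matrix.toLin'_mul_apply N N x
    rw [hN2] at h
    rw [hφdef, ← h]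
    simp
  obtain ⟨U, hU⟩ := Submodule.exists_isCompl (LinearMap.ker φ)
  set π : (Fin n → F) →ₗ[F] (Fin n → F) :=
    (LinearMap.ker φ).subtype ∘ₗ (LinearMap.ker φ).projectionOnto U hU with hπdef
  have hπK : ∀ x (hx : x ∈ LinearMap.ker φ), π x = x := by
    intro x hx
    have := Submodule.projectionOnto_apply_left hU ⟨x, hx⟩
    simp [hπdef, this]
  have hπmem : ∀ x, π x ∈ LinearMap.ker φ := by
    intro x
    simp [hπdef]
  have hππ : ∀ x, π (π x) = π x := fun x => hπK _ (hπmem x)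
  have hφπ : ∀ x, φ (π x) = 0 := fun x => hπmem x
  -- the two linear maps
  have key : ∀ a b : F, a + b + a * b = 0 →
      (LinearMap.id + a • π) ∘ₗ (LinearMap.id + b • π) = LinearMap.id := by
    intro a b hab
    apply LinearMap.ext; intro x
    rw [LinearMap.comp_apply, LinearMap.add_apply, LinearMap.add_apply,
      LinearMap.smul_apply, LinearMap.smul_apply, LinearMap.id_apply, LinearMap.id_apply,
      map_add, map_smul, hππ]
    have h : x + b • π x + a • (π x + b • π x) = x + (a + b + a * b) • π x := by module
    rw [h, hab, zero_smul, add_zero]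
  set f : (Fin n → F) →ₗ[F] (Fin n → F) := LinearMap.id + (c - 1) • π with hfdef
  set g : (Fin n → F) →ₗ[F] (Fin n → F) := LinearMap.id + (c⁻¹ - 1) • π with hgdef
  have hfg : f ∘ₗ g = LinearMap.id := by
    apply key; field_simp; ring
  have hgf : g ∘ₗ f = LinearMap.id := by
    apply key; field_simp; ring
  -- key relations with φ
  have hfφ : f ∘ₗ φ = c • φ := by
    apply LinearMap.ext; intro x
    have h1 : π (φ x) = φ x := hπK _ (by simp [LinearMap.mem_ker, hφ2 x])
    rw [LinearMap.comp_apply, LinearMap.smul_apply, hfdef, LinearMap.add_apply,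
      LinearMap.smul_apply, LinearMap.id_apply, h1]
    module
  have hφf : φ ∘ₗ f = φ := by
    apply LinearMap.ext; intro x
    rw [LinearMap.comp_apply, hfdef, LinearMap.add_apply, LinearMap.smul_apply,
      LinearMap.id_apply, map_add, map_smul, hφπ, smul_zero, add_zero]
  have hφg : φ ∘ₗ g = φ := by
    apply LinearMap.ext; intro x
    rw [LinearMap.comp_apply, hgdef, LinearMap.add_apply, LinearMap.smul_apply,
      LinearMap.id_apply, map_add, map_smul, hφπ, smul_zero, add_zero]
  -- matrices
  set Yf : Matrix (Fin n) (Fin n) F := LinearMap.toMatrix' f with hYf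
  set Yg : Matrix (Fin n) (Fin n) F := LinearMap.toMatrix' g with hYg
  have hMfg : Yf * Yg = 1 := by
    rw [hYf, hYg, ← LinearMap.toMatrix'_comp, hfg, LinearMap.toMatrix'_id]
  have hMgf : Yg * Yf = 1 := by
    rw [hYf, hYg, ← LinearMap.toMatrix'_comp, hgf, LinearMap.toMatrix'_id]
  have hMfN : Yf * N = c • N := by
    have := congrArg LinearMap.toMatrix' hfφ
    rwa [LinearMap.toMatrix'_comp, map_smul, LinearMap.toMatrix'_toLin'] at this
  have hMNf : N * Yf = N := by
    have := congrArg LinearMap.toMatrix' hφf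
    rwa [LinearMap.toMatrix'_comp, LinearMap.toMatrix'_toLin'] at this
  have hMNg : N * Yg = N := by
    have := congrArg LinearMap.toMatrix' hφg
    rwa [LinearMap.toMatrix'_comp, LinearMap.toMatrix'_toLin'] at this
  -- build the units
  set d : F := (c - 1)⁻¹ with hd
  have hc1' : c - 1 ≠ 0 := sub_ne_zero.mpr hc1
  have hBinv : ∀ s t : F, (1 + s • N) * (1 + t • N) = 1 + (s + t) • N := by
    intro s t
    simp only [add_mul, mul_add, one_mul, mul_one, Matrix.smul_mul, Matrix.mul_smul,
      hN2, smul_zero, add_zero, add_smul, smul_smul]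
    abel
  have hY1 : (1 + d • N) * (1 + (-d) • N) = 1 := by rw [hBinv]; simp
  have hY2 : (1 + (-d) • N) * (1 + d • N) = 1 := by rw [hBinv]; simp
  refine ⟨⟨Yf, Yg, hMfg, hMgf⟩, ⟨1 + d • N, 1 + (-d) • N, hY1, hY2⟩, ?_⟩
  have hXinv : (⟨Yf, Yg, hMfg, hMgf⟩ : GL (Fin n) F)⁻¹ =
      (⟨Yg, Yf, hMgf, hMfg⟩ : GL (Fin n) F) := rfl
  have hYinv : ((⟨1 + d • N, 1 + (-d) • N, hY1, hY2⟩ : GL (Fin n) F))⁻¹ =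
      (⟨1 + (-d) • N, 1 + d • N, hY2, hY1⟩ : GL (Fin n) F) := rfl
  rw [hXinv, hYinv]
  show A = (Yf * (1 + d • N) * Yg) * (1 + (-d) • N)
  have step1 : Yf * (1 + d • N) = Yf + (d * c) • N := by
    rw [mul_add, mul_one, Matrix.mul_smul, hMfN, smul_smul]
  have step2 : (Yf + (d * c) • N) * Yg = 1 + (d * c) • N := by
    rw [add_mul, Matrix.smul_mul, hMNg, hMfg]
  rw [step1, step2, hBinv]
  have hone : d * c + -d = 1 := by
    rw [hd]; field_simp; ring
  rw [hone, one_smul, hNdef]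
  abel
end

section
/- Let R be a left Artinian F-algebra over a field F with at least three elements, and let α ∈ R be a product of unipotent elements of R. Then the image of α in R/J(R) lies in the derived subgroup of the unit group of R/J(R). -/
open Ideal
open scoped commutatorElement

theorem my_semisimple (S : Type*) [Ring S] [IsArtinianRing S]
    (hJ : Ideal.jacobson (⊥ : Ideal S) = ⊥) : IsSemisimpleRing S := by
  classical
  -- set of finite infs of maximal left ideals
  set T : Set (Ideal S) :=
    {I | ∃ t : Finset (Ideal S), (∀ m ∈ t, m.IsMaximal) ∧ I = t.inf id} with hT
  have hTne : T.Nonempty := ⟨⊤, ∅, by simp, by simp⟩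
  obtain ⟨I₀, ⟨t₀, ht₀max, rfl⟩, hmin⟩ := IsArtinian.set_has_minimal T hTne
  have hbot : t₀.inf id = ⊥ := by
    have hle : t₀.inf id ≤ Ideal.jacobson (⊥ : Ideal S) := by
      apply le_sInf
      rintro m ⟨-, hm⟩
      by_contra hnot
      have hmem : (insert m t₀).inf id ∈ T := ⟨insert m t₀, by
        intro x hx
        rcases Finset.mem_insert.mp hx with rfl | hx
        · exact hm
        · exact ht₀max x hx, rfl⟩
      have hlt : (insert m t₀).inf id < t₀.inf id := by
        rw [Finset.inf_insert]
        refine lt_of_le_of_ne inf_le_right ?_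
        intro he
        exact hnot (he ▸ inf_le_left)
      exact hmin _ hmem hlt
    rw [hJ] at hle
    exact le_bot_iff.mp hle
  -- now embed S into the product of the quotients
  let f : S →ₗ[S] (∀ i : t₀, S ⧸ (i : Ideal S)) :=
    LinearMap.pi (fun i => (i : Ideal S).mkQ)
  have hinj : Function.Injective f := by
    rw [← LinearMap.ker_eq_bot]
    rw [eq_bot_iff]
    intro x hx
    rw [LinearMap.mem_ker] at hx
    have hx' : ∀ i : t₀, x ∈ (i : Ideal S) := by
      intro i
      have := congrFun hx i
      simpa only [f, LinearMap.pi_apply, Submodule.mkQ_apply, Pi.zero_apply,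
        Submodule.Quotient.mk_eq_zero] using this
    have : x ∈ t₀.inf id := Submodule.mem_finsetInf.mpr fun i hi => hx' ⟨i, hi⟩
    rw [hbot] at this
    exact this
  haveI : ∀ i : t₀, IsSimpleModule S (S ⧸ (i : Ideal S)) := fun i =>
    isSimpleModule_iff_isCoatom.mpr (ht₀max i i.2).out
  haveI : IsSemisimpleModule S (∀ i : t₀, S ⧸ (i : Ideal S)) := by
    refine isSemisimpleModule_of_isSemisimpleModule_submodule'
      (p := fun i => LinearMap.range (LinearMap.single S _ i)) (fun i => ?_)
      (LinearMap.iSup_range_single S _)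
    exact IsSemisimpleModule.range _
  haveI : IsSemisimpleModule S (LinearMap.range f) := inferInstance
  have h1 : IsSemisimpleModule S S := by
    have e := LinearEquiv.ofInjective f hinj
    exact (isSemisimpleModule_iff S S).mpr ((Submodule.orderIsoMapComap e).complementedLattice_iff.mpr
      ((isSemisimpleModule_iff S (LinearMap.range f)).mp inferInstance))
  exact h1


theorem my_jac_bot {R S : Type*} [Ring R] [Ring S] (π : R →+* S)
    (hsurj : Function.Surjective π)
    (hker : RingHom.ker π = Ideal.jacobson (⊥ : Ideal R)) :
    Ideal.jacobson (⊥ : Ideal S) = ⊥ := by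
  have h1 := Ideal.map_jacobson_of_surjective (I := Ideal.jacobson (⊥ : Ideal R)) hsurj hker.le
  rw [Ideal.jacobson_idem] at h1
  have h2 : Ideal.map π (Ideal.jacobson (⊥ : Ideal R)) = ⊥ := by
    rw [← hker]
    rw [eq_bot_iff, Ideal.map_le_iff_le_comap]
    intro x hx
    simpa using hx
  rw [h2] at h1
  exact h1.symm

/-- In a semisimple ring, every left ideal has a right identity idempotent. -/
theorem my_idem {S : Type*} [Ring S] [IsSemisimpleRing S] (L : Submodule S S) :
    ∃ e : S, e ∈ L ∧ ∀ x ∈ L, x * e = x := by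
  obtain ⟨K, hK⟩ := exists_isCompl L
  have h1 : (1 : S) ∈ L ⊔ K := by rw [hK.sup_eq_top]; trivial
  obtain ⟨e, he, g, hg, heg⟩ := Submodule.mem_sup.mp h1
  refine ⟨e, he, fun x hx => ?_⟩
  have hxg : x * g = 0 := by
    have h2 : x * g ∈ K := K.smul_mem x hg
    have h3 : x * g ∈ L := by
      have : x * g = x - x * e := by
        have := congrArg (x * ·) heg
        simp only [mul_add, mul_one] at this
        linear_combination (norm := noncomm_ring) this
      rw [this]
      exact L.sub_mem hx (L.smul_mem x he)
    exact (Submodule.disjoint_def.mp hK.disjoint) _ h3 h2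
  have := congrArg (x * ·) heg
  simp only [mul_add, mul_one] at this
  rw [hxg, add_zero] at this
  exact this

theorem my_regular {S : Type*} [Ring S] [IsSemisimpleRing S] (a : S) :
    ∃ s : S, a * s * a = a := by
  obtain ⟨e, heL, hid⟩ := my_idem (Submodule.span S {a})
  obtain ⟨s, hs⟩ := Submodule.mem_span_singleton.mp heL
  have ha : a * e = a := hid a (Submodule.mem_span_singleton_self a)
  refine ⟨s, ?_⟩
  rw [mul_assoc]
  rw [show s * a = e from hs]
  exact ha


theorem my_core {S : Type*} [Ring S] (m p g gi : S)
    (hm2 : m * m = 0) (hpm : p * m = m) (hmp : m * p = 0) (hpp : p * p = p)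
    (hg : ∀ x, g * x = x * g) (hgi : ∀ x, gi * x = x * gi)
    (hggi : g * gi = 1) (hgig : gi * g = 1) :
    ∃ u : Sˣ, (u : S) = 1 + (g * m - m) ∧ u ∈ commutator Sˣ := by
  have L1 : ∀ x, p * (m * x) = m * x := fun x => by rw [← mul_assoc, hpm]
  have L2 : ∀ x, m * (p * x) = 0 := fun x => by rw [← mul_assoc, hmp, zero_mul]
  have L3 : ∀ x, p * (p * x) = p * x := fun x => by rw [← mul_assoc, hpp]
  have L4 : ∀ x, m * (m * x) = 0 := fun x => by rw [← mul_assoc, hm2, zero_mul]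
  have hg1 : ∀ x y, x * (g * y) = g * (x * y) := fun x y => by
    rw [← mul_assoc, ← hg, mul_assoc]
  have hgi1 : ∀ x y, x * (gi * y) = gi * (x * y) := fun x y => by
    rw [← mul_assoc, ← hgi, mul_assoc]
  have hg2 : ∀ x, x * g = g * x := fun x => (hg x).symm
  have hgi2 : ∀ x, x * gi = gi * x := fun x => (hgi x).symm
  have hGG : ∀ x, g * (gi * x) = x := fun x => by rw [← mul_assoc, hggi, one_mul]
  have hGG2 : ∀ x, gi * (g * x) = x := fun x => by rw [← mul_assoc, hgig, one_mul]
  have hb1 : ((1:S) + m) * (1 - m) = 1 := by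
    simp only [mul_add, add_mul, sub_mul, mul_sub, one_mul, mul_one, hm2]
    abel
  have hb2 : ((1:S) - m) * (1 + m) = 1 := by
    simp only [mul_add, add_mul, sub_mul, mul_sub, one_mul, mul_one, hm2]
    abel
  have hd1 : ((1:S) - p + g * p) * (1 - p + gi * p) = 1 := by
    simp only [mul_add, add_mul, sub_mul, mul_sub, one_mul, mul_one, mul_assoc,
      hgi1, hgi2, hGG, hGG2, L3, hpp, mul_zero, zero_mul]
    abel
  have hd2 : ((1:S) - p + gi * p) * (1 - p + g * p) = 1 := by
    simp only [mul_add, add_mul, sub_mul, mul_sub, one_mul, mul_one, mul_assoc,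
      hg1, hg2, hGG, hGG2, L3, hpp, mul_zero, zero_mul]
    abel
  refine ⟨⁅(⟨1 - p + g * p, 1 - p + gi * p, hd1, hd2⟩ : Sˣ), (⟨1 + m, 1 - m, hb1, hb2⟩ : Sˣ)⁆,
    ?_, ?_⟩
  · rw [commutatorElement_def]
    show ((1:S) - p + g * p) * (1 + m) * (1 - p + gi * p) * (1 - m) = 1 + (g * m - m)
    simp only [mul_add, add_mul, sub_mul, mul_sub, one_mul, mul_one, mul_assoc,
      hgi1, hgi2, hGG, hGG2, L1, L2, L3, L4, hpm, hmp, hpp, hm2, mul_zero, zero_mul,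
      sub_zero, add_zero, zero_add, zero_sub, sub_neg_eq_add, neg_zero]
    abel
  · exact Subgroup.commutator_mem_commutator (Subgroup.mem_top _) (Subgroup.mem_top _)




theorem my_sq_comm {S : Type*} [Ring S] (c s g gi t : S) (hc2 : c * c = 0)
    (hcs : c * s * c = c) (hg : ∀ x, g * x = x * g) (hggi : g * gi = 1) (hgig : gi * g = 1)
    (htg : t * (g - 1) = 1) (hgt : (g - 1) * t = 1) (ht : ∀ x, t * x = x * t) :
    ∃ u : Sˣ, (u : S) = 1 + c ∧ u ∈ commutator Sˣ := by
  have hgi : ∀ x, gi * x = x * gi := by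
    intro x
    calc gi * x = gi * x * (g * gi) := by rw [hggi, mul_one]
    _ = gi * (x * g) * gi := by noncomm_ring
    _ = gi * (g * x) * gi := by rw [← hg]
    _ = (gi * g) * (x * gi) := by noncomm_ring
    _ = x * gi := by rw [hgig, one_mul]
  have hm2 : (t * c) * (t * c) = 0 := by
    calc t * c * (t * c) = t * (c * t) * c := by noncomm_ring
    _ = t * (t * c) * c := by rw [← ht]
    _ = (t * t) * (c * c) := by noncomm_ring
    _ = 0 := by rw [hc2, mul_zero]
  have hpm : ((t * c) * (s * (g - 1))) * (t * c) = t * c := by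
    calc t * c * (s * (g - 1)) * (t * c) = t * c * s * ((g-1) * t) * c := by noncomm_ring
    _ = t * c * s * 1 * c := by rw [hgt]
    _ = t * (c * s * c) := by noncomm_ring
    _ = t * c := by rw [hcs]
  have hmp : (t * c) * ((t * c) * (s * (g - 1))) = 0 := by
    calc (t * c) * ((t * c) * (s * (g-1))) = ((t*c) * (t*c)) * (s * (g-1)) := by noncomm_ring
    _ = 0 := by rw [hm2, zero_mul]
  have hpp : ((t * c) * (s * (g - 1))) * ((t * c) * (s * (g - 1)))
      = (t * c) * (s * (g - 1)) := by
    calc ((t*c) * (s * (g-1))) * ((t*c) * (s * (g-1)))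
        = (((t*c) * (s * (g-1))) * (t*c)) * (s * (g-1)) := by noncomm_ring
    _ = (t*c) * (s * (g-1)) := by rw [hpm]
  obtain ⟨u, hu, humem⟩ := my_core (t * c) ((t * c) * (s * (g - 1))) g gi
    hm2 hpm hmp hpp hg hgi hggi hgig
  refine ⟨u, ?_, humem⟩
  rw [hu]
  have : g * (t * c) - t * c = c := by
    calc g * (t * c) - t * c = ((g - 1) * t) * c := by noncomm_ring
    _ = c := by rw [hgt, one_mul]
  rw [this]

/-- every unipotent in a semisimple ring is in the derived subgroup, given a suitable
central unit g with g - 1 invertible. -/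
theorem my_unipotent {S : Type*} [Ring S] [IsSemisimpleRing S] (g gi t : S)
    (hg : ∀ x, g * x = x * g) (hggi : g * gi = 1) (hgig : gi * g = 1)
    (htg : t * (g - 1) = 1) (hgt : (g - 1) * t = 1) (ht : ∀ x, t * x = x * t)
    (hreg : ∀ a : S, ∃ s : S, a * s * a = a)
    (hidem : ∀ L : Submodule S S, ∃ e : S, e ∈ L ∧ ∀ x ∈ L, x * e = x) :
    ∀ (k : ℕ) (n : S), n ^ k = 0 → ∃ u : Sˣ, (u : S) = 1 + n ∧ u ∈ commutator Sˣ := by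
  intro k
  induction k using Nat.strong_induction_on with
  | _ k ih =>
    intro n hn
    match k, hn with
    | 0, hn =>
      -- 1 = 0, S is trivial
      have h01 : (1 : S) = 0 := by simpa using hn
      refine ⟨1, ?_, one_mem _⟩
      have : ∀ x y : S, x = y := fun x y => by
        calc x = x * 1 := (mul_one x).symm
        _ = x * 0 := by rw [h01]
        _ = y * 0 := by rw [mul_zero, mul_zero]
        _ = y * 1 := by rw [h01]
        _ = y := mul_one y
      exact this _ _
    | 1, hn =>
      have : n = 0 := by simpa using hn
      exact ⟨1, by simp [this], one_mem _⟩
    | (j+2), hn =>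
      -- the left ideal of x with x * n^(j+1) = 0
      obtain ⟨e, heL, hid⟩ := hidem (LinearMap.ker (LinearMap.toSpanSingleton S S (n ^ (j+1))))
      have hmem : ∀ x : S, x ∈ LinearMap.ker (LinearMap.toSpanSingleton S S (n ^ (j+1)))
          ↔ x * n ^ (j+1) = 0 := by
        intro x
        rw [LinearMap.mem_ker, LinearMap.toSpanSingleton_apply]
        exact Iff.rfl
      have he : e * n ^ (j+1) = 0 := (hmem e).mp heL
      have hnL : n * n ^ (j+1) = 0 := by
        rw [← pow_succ']
        exact hn
      have hne : n * e = n := hid n ((hmem n).mpr hnL)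
      -- a = e * n has a^(j+1) = 0
      have hapow : ∀ i : ℕ, 1 ≤ i → (e * n) ^ i = e * n ^ i := by
        intro i hi
        induction i with
        | zero => omega
        | succ i ih2 =>
          rcases Nat.eq_or_lt_of_le hi with h1 | h1
          · simp [← h1]
          · have hi1 : 1 ≤ i := by omega
            rw [pow_succ, ih2 hi1]
            calc e * n ^ i * (e * n) = e * (n ^ (i-1) * (n * e)) * n := by
                  rw [show n ^ i = n ^ (i-1) * n by rw [← pow_succ]; congr 1; omega]
                  noncomm_ring
            _ = e * (n ^ (i-1) * n) * n := by rw [hne]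
            _ = e * n ^ i * n := by rw [← pow_succ]; rw [show i - 1 + 1 = i by omega]
            _ = e * n ^ (i+1) := by rw [pow_succ, mul_assoc]
      have ha : (e * n) ^ (j+1) = 0 := by rw [hapow (j+1) (by omega), he]
      obtain ⟨u₁, hu₁, humem₁⟩ := ih (j+1) (by omega) (e * n) ha
      -- b = n - e * n is square-zero
      have hb2 : (n - e * n) * (n - e * n) = 0 := by
        have h1 : n * (e * n) = n * n := by rw [← mul_assoc, hne]
        calc (n - e * n) * (n - e * n)
            = n * n - n * (e * n) - e * (n * n - n * (e * n)) := by noncomm_ring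
        _ = 0 := by rw [h1, sub_self, mul_zero, sub_zero]
      obtain ⟨s, hs⟩ := hreg (n - e * n)
      obtain ⟨u₂, hu₂, humem₂⟩ := my_sq_comm (n - e * n) s g gi t hb2 hs hg hggi hgig htg hgt ht
      refine ⟨u₁ * u₂, ?_, mul_mem humem₁ humem₂⟩
      rw [Units.val_mul, hu₁, hu₂]
      have hab : (e * n) * (n - e * n) = 0 := by
        calc (e * n) * (n - e * n) = e * (n * n) - e * ((n * e) * n) := by noncomm_ring
        _ = 0 := by rw [hne, sub_self]
      calc (1 + e * n) * (1 + (n - e * n))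
          = 1 + (e * n + (n - e * n)) + (e * n) * (n - e * n) := by noncomm_ring
      _ = 1 + n := by rw [hab, add_zero]; noncomm_ring


theorem image_in_derived_subgroup (F : Type*) [Field F]
    (h3 : ∃ a b c : F, a ≠ b ∧ b ≠ c ∧ a ≠ c)
    (R : Type*) [Ring R] [Algebra F R] [IsArtinianRing R]
    (α : R) (l : List R) (hl : ∀ z ∈ l, IsNilpotent (1 - z)) (hprod : l.prod = α)
    -- S plays the role of the quotient R / J(R):
    (S : Type*) [Ring S] (π : R →+* S) (hsurj : Function.Surjective π)
    (hker : ∀ r : R, π r = 0 ↔ r ∈ Ideal.jacobson (⊥ : Ideal R)) :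
    ∃ u : Sˣ, (u : S) = π α ∧ u ∈ commutator Sˣ := by
  -- find a scalar a ≠ 0, a ≠ 1
  obtain ⟨x, y, z, hxy, hyz, hxz⟩ := h3
  have hex : ∃ a : F, a ≠ 0 ∧ a ≠ 1 := by
    by_cases hx0 : x = 0
    · by_cases hy1 : y = 1
      · exact ⟨z, fun h => hxz (by rw [hx0, h]), fun h => hyz (by rw [hy1, h])⟩
      · by_cases hy0 : y = 0
        · exact absurd (hx0.trans hy0.symm) hxy
        · exact ⟨y, hy0, hy1⟩
    · by_cases hx1 : x = 1
      · by_cases hy0 : y = 0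
        · exact ⟨z, fun h => hyz (by rw [hy0, h]), fun h => hxz (by rw [hx1, h])⟩
        · exact ⟨y, hy0, fun h => hxy (hx1.trans h.symm)⟩
      · exact ⟨x, hx0, hx1⟩
  obtain ⟨a, ha0, ha1⟩ := hex
  -- semisimplicity of S
  haveI : IsArtinianRing S := hsurj.isArtinianRing (f := π)
  have hkerEq : RingHom.ker π = Ideal.jacobson (⊥ : Ideal R) := by
    ext r
    rw [RingHom.mem_ker]
    exact hker r
  haveI : IsSemisimpleRing S := my_semisimple S (my_jac_bot π hsurj hkerEq)
  -- the central unit data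
  set φ : F →+* S := π.comp (algebraMap F R) with hφ
  have hcent : ∀ (b : F) (x : S), φ b * x = x * φ b := by
    intro b x
    obtain ⟨r, rfl⟩ := hsurj x
    rw [hφ, RingHom.comp_apply, ← _root_.map_mul, ← _root_.map_mul, Algebra.commutes]
  set g : S := φ a with hgdef
  set gi : S := φ a⁻¹ with hgidef
  set t : S := φ (a - 1)⁻¹ with htdef
  have hg : ∀ x, g * x = x * g := hcent a
  have hggi : g * gi = 1 := by rw [hgdef, hgidef, ← _root_.map_mul, mul_inv_cancel₀ ha0, map_one]
  have hgig : gi * g = 1 := by rw [hgdef, hgidef, ← _root_.map_mul, inv_mul_cancel₀ ha0, map_one]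
  have hg1 : g - 1 = φ (a - 1) := by rw [map_sub, map_one]
  have ha1' : a - 1 ≠ 0 := sub_ne_zero_of_ne ha1
  have htg : t * (g - 1) = 1 := by
    rw [htdef, hg1, ← _root_.map_mul, inv_mul_cancel₀ ha1', map_one]
  have hgt : (g - 1) * t = 1 := by
    rw [htdef, hg1, ← _root_.map_mul, mul_inv_cancel₀ ha1', map_one]
  have ht : ∀ x, t * x = x * t := hcent (a - 1)⁻¹
  -- every unipotent is in the derived subgroup
  have key : ∀ w : S, IsNilpotent (1 - w) → ∃ u : Sˣ, (u : S) = w ∧ u ∈ commutator Sˣ := by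
    intro w hw
    obtain ⟨k, hk⟩ := hw.neg
    have hk' : (w - 1) ^ k = 0 := by rw [show w - 1 = -(1 - w) by abel]; exact hk
    obtain ⟨u, hu, humem⟩ := my_unipotent g gi t hg hggi hgig htg hgt ht
      (my_regular) (my_idem) k (w - 1) hk'
    exact ⟨u, by rw [hu]; abel, humem⟩
  -- conclude by induction on the list
  have main : ∀ L : List S, (∀ w ∈ L, IsNilpotent (1 - w)) →
      ∃ u : Sˣ, (u : S) = L.prod ∧ u ∈ commutator Sˣ := by
    intro L
    induction L with
    | nil => exact fun _ => ⟨1, by simp, one_mem _⟩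
    | cons w L ihL =>
      intro hL
      obtain ⟨u, hu, humem⟩ := key w (hL w (by simp))
      obtain ⟨v, hv, hvmem⟩ := ihL (fun z hz => hL z (by simp [hz]))
      exact ⟨u * v, by rw [Units.val_mul, hu, hv, List.prod_cons], mul_mem humem hvmem⟩
  obtain ⟨u, hu, humem⟩ := main (l.map π) (by
    intro w hw
    obtain ⟨z, hz, rfl⟩ := List.mem_map.mp hw
    have := (hl z hz).map π
    rwa [map_sub, map_one] at this)
  refine ⟨u, ?_, humem⟩
  rw [hu, ← hprod, map_list_prod]
end

section
/- Let R be a ring whose Jacobson radical J(R) is nilpotent, and let U and V be subgroups of R* consisting entirely of unipotent elements, with U ⊆ 1 + J(R). Then every element of the set U·V = {uv : u ∈ U, v ∈ V} is unipotent. -/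
theorem mul_unipotent_of_jacobson_nilpotent (R : Type*) [Ring R]
    (hJ : ∃ n : ℕ, ∀ l : List R,
      (∀ z ∈ l, z ∈ Ideal.jacobson (⊥ : Ideal R)) → l.length = n → l.prod = 0)
    (U V : Subgroup Rˣ)
    (hU : ∀ u ∈ U, ((u : R) - 1) ∈ Ideal.jacobson (⊥ : Ideal R))
    (hUuni : ∀ u ∈ U, IsNilpotent ((1 : R) - (u : R)))
    (hVuni : ∀ v ∈ V, IsNilpotent ((1 : R) - (v : R))) :
    ∀ u ∈ U, ∀ v ∈ V, IsNilpotent ((1 : R) - ((u * v : Rˣ) : R)) := by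
  obtain ⟨n, hn⟩ := hJ
  intro u hu v hv
  obtain ⟨k, hk⟩ := hVuni v hv
  set J := Ideal.jacobson (⊥ : Ideal R) with hJdef
  -- J is a two-sided ideal
  have Jr : ∀ x y : R, x ∈ J → x * y ∈ J := by
    intro x y hx
    exact (Ideal.jacobson (⊥ : Ideal R)).mul_mem_right y hx
  have ha : ((1 : R) - u) ∈ J := by
    have h1 := J.neg_mem (hU u hu)
    simpa using h1
  have hb : ((1 : R) - u) * v ∈ J := Jr _ _ ha
  set a : R := 1 - (v : R) with hadef
  set b : R := ((1 : R) - u) * v with hbdef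
  have hdiff : ∀ m : ℕ, (a + b) ^ m - a ^ m ∈ J := by
    intro m
    induction m with
    | zero => simp
    | succ m ih =>
        have heq : (a + b) ^ (m + 1) - a ^ (m + 1)
            = ((a + b) ^ m - a ^ m) * (a + b) + a ^ m * b := by
          rw [pow_succ, pow_succ]; noncomm_ring
        rw [heq]
        exact J.add_mem (Jr _ _ ih) (J.mul_mem_left _ hb)
  have habe : (1 : R) - ((u * v : Rˣ) : R) = a + b := by
    rw [hadef, hbdef]; push_cast; noncomm_ring
  have key : ((1 : R) - ((u * v : Rˣ) : R)) ^ k ∈ J := by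
    rw [habe]
    have := hdiff k
    rw [hk, sub_zero] at this
    exact this
  refine ⟨k * n, ?_⟩
  rw [pow_mul]
  have h2 := hn (List.replicate n (((1 : R) - ((u * v : Rˣ) : R)) ^ k))
    (fun z hz => by rw [List.eq_of_mem_replicate hz]; exact key)
    List.length_replicate
  simpa [List.prod_replicate] using h2
end
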